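/- Let α, β ∈ (0,1), n ∈ ℕ, n ≥ 1, and let c₁, c₂, a₀, b₁, r₁,…,rₙ, k₁,…,kₙ ∈ ℝ. Then u(x,t) = c₁ - c₂ b₁ (Γ(β+1)/Γ(α+1)) t^α + c₂ x^β + Σ_{s=1}^n r_s E_α((a₀ k_s - b₁) k_s t^α) E_β(k_s x^β) is an exact solution of the linear time-space fractional diffusion–convection equation: for all x > 0 and t > 0, (C_t^α u)(x,t) = a₀ (C_x^β (C_x^β u))(x,t) - b₁ (C_x^β u)(x,t). -/

import Mathlib

/-- The two-parameter Mittag-Leffler function `E_{β,γ}(z) = Σ_{r=0}^∞ z^r / Γ(βr + γ)`. -/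
noncomputable def mittagLeffler (β γ z : ℝ) : ℝ :=
  ∑' r : ℕ, z ^ r / Real.Gamma (β * r + γ)

/-- Caputo fractional partial derivative of order `α` with respect to `t`. -/
noncomputable def caputoT (α : ℝ) (u : ℝ → ℝ → ℝ) : ℝ → ℝ → ℝ := fun x t =>
  (1 / Real.Gamma (1 - α)) * ∫ s in (0:ℝ)..t, deriv (fun s' => u x s') s * (t - s) ^ (-α)

/-- Caputo fractional partial derivative of order `β` with respect to `x`. -/
noncomputable def caputoX (β : ℝ) (u : ℝ → ℝ → ℝ) : ℝ → ℝ → ℝ := fun x t =>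
  (1 / Real.Gamma (1 - β)) * ∫ y in (0:ℝ)..x, deriv (fun y' => u y' t) y * (x - y) ^ (-β)

/-- The exact solution
`u(x,t) = c₁ - c₂ b₁ (Γ(β+1)/Γ(α+1)) t^α + c₂ x^β
          + Σ_{s=1}^n rₛ E_α((a₀ kₛ - b₁) kₛ t^α) E_β(kₛ x^β)`. -/
noncomputable def uSol (α β : ℝ) (n : ℕ) (c₁ c₂ a₀ b₁ : ℝ) (r kc : Fin n → ℝ) :
    ℝ → ℝ → ℝ := fun x t =>
  c₁ - c₂ * b₁ * (Real.Gamma (β + 1) / Real.Gamma (α + 1)) * t ^ α + c₂ * x ^ β +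
    ∑ s : Fin n,
      r s * mittagLeffler α 1 ((a₀ * kc s - b₁) * kc s * t ^ α) *
        mittagLeffler β 1 (kc s * x ^ β)

open MeasureTheory Real Set intervalIntegral Filter

lemma realBeta01 {p q : ℝ} (hp : 0 < p) (hq : 0 < q) :
    ∫ y in (0:ℝ)..1, y ^ (p-1) * (1-y) ^ (q-1)
      = Real.Gamma p * Real.Gamma q / Real.Gamma (p+q) := by
  have hpq : 0 < p + q := by linarith
  have h := Complex.Gamma_mul_Gamma_eq_betaIntegral (s := (p:ℂ)) (t := (q:ℂ))
    (by simpa using hp) (by simpa using hq)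
  have hB : Complex.betaIntegral p q
      = ((∫ y in (0:ℝ)..1, y ^ (p-1) * (1-y) ^ (q-1) : ℝ) : ℂ) := by
    rw [Complex.betaIntegral, ← intervalIntegral.integral_ofReal]
    refine intervalIntegral.integral_congr fun y hy => ?_
    rw [Set.uIcc_of_le (by norm_num : (0:ℝ) ≤ 1)] at hy
    push_cast
    rw [Complex.ofReal_cpow hy.1, Complex.ofReal_cpow (by linarith [hy.2] : (0:ℝ) ≤ 1 - y)]
    push_cast
    ring
  rw [hB, ← Complex.ofReal_add, Complex.Gamma_ofReal, Complex.Gamma_ofReal,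
    Complex.Gamma_ofReal, ← Complex.ofReal_mul, ← Complex.ofReal_mul] at h
  have := Complex.ofReal_injective h
  have hΓ : Real.Gamma (p+q) ≠ 0 := (Real.Gamma_pos_of_pos hpq).ne'
  field_simp
  linarith [this]

lemma betaIntegrable {a b x : ℝ} (ha : -1 < a) (hb : -1 < b) (hx : 0 < x) :
    IntervalIntegrable (fun y => y ^ a * (x - y) ^ b) volume 0 x := by
  have h1 : IntervalIntegrable (fun y => y ^ a * (x - y) ^ b) volume 0 (x/2) := by
    apply IntervalIntegrable.mul_continuousOn (intervalIntegrable_rpow' ha)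
    apply ContinuousOn.rpow_const
    · exact (continuous_const.sub continuous_id).continuousOn
    · intro y hy
      rw [Set.uIcc_of_le (by linarith : (0:ℝ) ≤ x/2)] at hy
      left; intro hc; nlinarith [hy.2]
  have h2 : IntervalIntegrable (fun y => y ^ a * (x - y) ^ b) volume (x/2) x := by
    have base : IntervalIntegrable (fun y => (x - y) ^ b) volume (x/2) x := by
      have : IntervalIntegrable (fun y => y ^ b) volume (x - x/2) (x - x) := by
        simpa using (intervalIntegrable_rpow' hb (a := x - x/2) (b := 0))
      simpa using this.comp_sub_left x
    apply IntervalIntegrable.continuousOn_mul base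
    apply ContinuousOn.rpow_const continuous_id.continuousOn
    intro y hy
    rw [Set.uIcc_of_le (by linarith : x/2 ≤ x)] at hy
    left; simp only [id]; intro hc; nlinarith [hy.1]
  exact h1.trans h2

lemma betaScaled {a b x : ℝ} (ha : -1 < a) (hb : -1 < b) (hx : 0 < x) :
    ∫ y in (0:ℝ)..x, y ^ a * (x - y) ^ b
      = Real.Gamma (a+1) * Real.Gamma (b+1) / Real.Gamma (a+b+2) * x ^ (a+b+1) := by
  have hc := intervalIntegral.integral_comp_mul_left
    (a := (0:ℝ)) (b := 1) (c := x) (f := fun y => y ^ a * (x - y) ^ b) hx.ne'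
  have key : ∫ u in (0:ℝ)..1, (x*u) ^ a * (x - x*u) ^ b
      = x ^ (a+b) * (Real.Gamma (a+1) * Real.Gamma (b+1) / Real.Gamma (a+b+2)) := by
    have hval := realBeta01 (p := a+1) (q := b+1) (by linarith) (by linarith)
    simp only [add_sub_cancel_right] at hval
    rw [show a+1+(b+1) = a+b+2 by ring] at hval
    rw [← hval, ← intervalIntegral.integral_const_mul]
    refine intervalIntegral.integral_congr fun u hu => ?_
    rw [Set.uIcc_of_le (by norm_num : (0:ℝ) ≤ 1)] at hu
    have h1 : (x*u) ^ a = x ^ a * u ^ a := Real.mul_rpow hx.le hu.1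
    have h2 : (x - x*u) ^ b = x ^ b * (1-u) ^ b := by
      rw [show x - x*u = x * (1-u) by ring, Real.mul_rpow hx.le (by linarith [hu.2])]
    rw [h1, h2, Real.rpow_add hx]
    ring
  rw [key, mul_zero, mul_one, smul_eq_mul] at hc
  have hxne : x ≠ 0 := hx.ne'
  rw [show a+b+1 = (a+b)+1 by ring, Real.rpow_add hx, Real.rpow_one]
  field_simp at hc
  rw [← hc]
  ring

lemma Gamma_lower {μ x : ℝ} (hμ0 : 0 < μ) (hμ1 : μ < 1) (hx : 1 ≤ x) :
    Real.Gamma x * x ^ μ ≤ 2 * Real.Gamma (x + μ) := by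
  have hx0 : (0:ℝ) < x := by linarith
  have hxμ : (0:ℝ) < x + μ := by linarith
  have h := Real.Gamma_mul_add_mul_le_rpow_Gamma_mul_rpow_Gamma
    (s := x + μ) (t := x + μ + 1) (a := μ) (b := 1 - μ) hxμ (by linarith) hμ0
    (by linarith) (by ring)
  rw [show μ * (x + μ) + (1 - μ) * (x + μ + 1) = x + 1 by ring] at h
  rw [Real.Gamma_add_one hx0.ne', Real.Gamma_add_one hxμ.ne'] at h
  have hΓ : 0 < Real.Gamma (x + μ) := Real.Gamma_pos_of_pos hxμ
  have hΓx : 0 < Real.Gamma x := Real.Gamma_pos_of_pos hx0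
  have h2 : ((x + μ) * Real.Gamma (x + μ)) ^ (1 - μ)
      = (x + μ) ^ (1 - μ) * Real.Gamma (x + μ) ^ (1 - μ) :=
    Real.mul_rpow hxμ.le hΓ.le
  rw [h2] at h
  have h3 : Real.Gamma (x + μ) ^ μ * ((x + μ) ^ (1 - μ) * Real.Gamma (x + μ) ^ (1 - μ))
      = Real.Gamma (x + μ) * (x + μ) ^ (1 - μ) := by
    rw [mul_comm ((x + μ) ^ (1 - μ)) _, ← mul_assoc, ← Real.rpow_add hΓ]
    norm_num
  rw [h3] at h
  -- h : x * Gamma x ≤ Gamma (x+μ) * (x+μ)^(1-μ)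
  have h4 : (x + μ) ^ (1 - μ) ≤ 2 * x ^ (1 - μ) := by
    calc (x + μ) ^ (1 - μ) ≤ (2 * x) ^ (1 - μ) :=
          Real.rpow_le_rpow hxμ.le (by linarith) (by linarith)
      _ = 2 ^ (1 - μ) * x ^ (1 - μ) := Real.mul_rpow (by norm_num) hx0.le
      _ ≤ 2 * x ^ (1 - μ) := by
          have : (2:ℝ) ^ (1 - μ) ≤ 2 ^ (1:ℝ) :=
            Real.rpow_le_rpow_of_exponent_le (by norm_num) (by linarith)
          rw [Real.rpow_one] at this
          have := Real.rpow_pos_of_pos hx0 (1 - μ)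
          nlinarith
  have h5 : x * Real.Gamma x ≤ Real.Gamma (x + μ) * (2 * x ^ (1 - μ)) :=
    h.trans (by nlinarith)
  -- divide by x^(1-μ)
  have hxp : 0 < x ^ (1 - μ) := Real.rpow_pos_of_pos hx0 _
  have e1 : x * Real.Gamma x = Real.Gamma x * x ^ μ * x ^ (1 - μ) := by
    rw [mul_assoc, ← Real.rpow_add hx0]
    norm_num
    ring
  rw [e1] at h5
  have := (mul_le_mul_iff_of_pos_right hxp).mp (by linarith [h5] :
    Real.Gamma x * x ^ μ * x ^ (1 - μ) ≤ 2 * Real.Gamma (x + μ) * x ^ (1 - μ))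
  exact this

lemma summable_ml_type {μ : ℝ} (hμ0 : 0 < μ) (hμ1 : μ < 1) {q : ℝ} (hq : 0 ≤ q) :
    Summable (fun r : ℕ => ((r:ℝ) + 1) * q ^ r / Real.Gamma (μ * r + 1)) := by
  apply summable_of_ratio_norm_eventually_le (r := 1/2) (by norm_num)
  have htend : Tendsto (fun n : ℕ => (μ * n + 1) ^ μ) atTop atTop := by
    apply (tendsto_rpow_atTop hμ0).comp
    apply tendsto_atTop_add_const_right
    exact (tendsto_natCast_atTop_atTop (R := ℝ)).const_mul_atTop hμ0
  filter_upwards [htend.eventually_ge_atTop (8 * q)] with n h8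
  set x := μ * (n:ℝ) + 1 with hxdef
  have hx1 : (1:ℝ) ≤ x := by
    have : (0:ℝ) ≤ (n:ℝ) := Nat.cast_nonneg n
    nlinarith
  have hx0 : (0:ℝ) < x := by linarith
  have hΓx : 0 < Real.Gamma x := Real.Gamma_pos_of_pos hx0
  have hΓxμ : 0 < Real.Gamma (x + μ) := Real.Gamma_pos_of_pos (by linarith)
  have harg : μ * ((n:ℕ):ℝ) + 1 = x := rfl
  have harg2 : μ * ((n+1 : ℕ):ℝ) + 1 = x + μ := by push_cast; ring
  rw [harg2]
  have hnn : (0:ℝ) ≤ ((n:ℝ) + 1) * q ^ n / Real.Gamma (μ * n + 1) := by positivity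
  have hnn2 : (0:ℝ) ≤ (((n+1:ℕ):ℝ) + 1) * q ^ (n+1) / Real.Gamma (x + μ) := by positivity
  rw [Real.norm_eq_abs, Real.norm_eq_abs, abs_of_nonneg hnn, abs_of_nonneg hnn2]
  have hG := Gamma_lower hμ0 hμ1 hx1
  have hx8 : 8 * q ≤ x ^ μ := h8
  have key : (((n+1:ℕ):ℝ) + 1) * q ^ (n+1) * Real.Gamma x * 2
      ≤ (((n:ℝ)) + 1) * q ^ n * Real.Gamma (x + μ) := by
    push_cast
    have e : q ^ (n+1) = q ^ n * q := pow_succ q n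
    rw [e]
    have hqn : (0:ℝ) ≤ q ^ n := pow_nonneg hq n
    have c1 : ((n:ℝ) + 1) * q ^ n * (Real.Gamma x * x ^ μ)
        ≤ ((n:ℝ) + 1) * q ^ n * (2 * Real.Gamma (x + μ)) := by
      apply mul_le_mul_of_nonneg_left hG (by positivity)
    have c2 : ((n:ℝ) + 1) * q ^ n * (Real.Gamma x * (8 * q))
        ≤ ((n:ℝ) + 1) * q ^ n * (Real.Gamma x * x ^ μ) := by
      apply mul_le_mul_of_nonneg_left _ (by positivity)
      exact mul_le_mul_of_nonneg_left hx8 hΓx.le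
    have hn0 : (0:ℝ) ≤ (n:ℝ) := Nat.cast_nonneg n
    nlinarith [mul_nonneg (mul_nonneg hn0 hqn) (mul_nonneg hΓx.le hq)]
  have h2' : (1/2 : ℝ) * (((n:ℝ) + 1) * q ^ n / Real.Gamma (μ * n + 1))
      = (((n:ℝ) + 1) * q ^ n / 2) / Real.Gamma x := by
    rw [← harg]; ring
  rw [h2', div_le_div_iff₀ hΓxμ hΓx]
  push_cast at key ⊢
  linarith [key]

/-- summand of the termwise derivative of `x ↦ E_μ(k x^μ)` -/
noncomputable def dML (μ k : ℝ) (r : ℕ) (y : ℝ) : ℝ :=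
  k ^ r * (μ * r) * y ^ (μ * r - 1) / Real.Gamma (μ * r + 1)

lemma summable_ml_aux {μ : ℝ} (hμ0 : 0 < μ) (hμ1 : μ < 1) {q : ℝ} (hq : 0 ≤ q) (C : ℝ)
    {f : ℕ → ℝ}
    (hf : ∀ r : ℕ, ‖f r‖ ≤ C * (((r:ℝ)+1) * q ^ r / Real.Gamma (μ * r + 1))) :
    Summable f :=
  Summable.of_norm_bounded ((summable_ml_type hμ0 hμ1 hq).mul_left C) hf

lemma norm_dML_le {μ k : ℝ} (hμ0 : 0 < μ) {δ R z : ℝ} (hδ : 0 < δ) (hz1 : δ ≤ z)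
    (hz2 : z ≤ R) (r : ℕ) :
    ‖dML μ k r z‖ ≤ (μ/δ) * (((r:ℝ)+1) * (|k| * R^μ)^r / Real.Gamma (μ*r+1)) := by
  have hz0 : 0 < z := lt_of_lt_of_le hδ hz1
  have hR0 : 0 < R := lt_of_lt_of_le hz0 hz2
  have hΓ : 0 < Real.Gamma (μ*r+1) := Real.Gamma_pos_of_pos (by positivity)
  have e1 : ‖dML μ k r z‖ = μ * (r:ℝ) * (|k|^r * z^(μ*r-1)) / Real.Gamma (μ*r+1) := by
    rw [dML, Real.norm_eq_abs, abs_div, abs_of_pos hΓ, abs_mul, abs_mul, abs_pow,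
      abs_of_nonneg (by positivity : (0:ℝ) ≤ μ * r),
      abs_of_nonneg (Real.rpow_nonneg hz0.le _)]
    ring
  have eR : (|k| * R^μ)^r = |k|^r * R^(μ*r) := by
    rw [mul_pow, ← Real.rpow_natCast (R^μ) r, ← Real.rpow_mul hR0.le]
  have hzb : z^(μ*r-1) ≤ R^(μ*r)/δ := by
    have h1 : z^(μ*r-1) = z^(μ*(r:ℝ))/z := by
      rw [Real.rpow_sub hz0, Real.rpow_one]
    rw [h1]
    apply div_le_div₀ (Real.rpow_nonneg hR0.le _)
      (Real.rpow_le_rpow hz0.le hz2 (by positivity)) hδ hz1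
  rw [e1, eR]
  rw [show (μ/δ) * (((r:ℝ)+1) * (|k|^r * R^(μ*r)) / Real.Gamma (μ*r+1))
      = μ * ((r:ℝ)+1) * (|k|^r * (R^(μ*r)/δ)) / Real.Gamma (μ*r+1) by ring]
  gcongr
  exact le_of_lt (lt_add_one _)

lemma summable_dML_mul {μ : ℝ} (hμ0 : 0 < μ) (hμ1 : μ < 1) (k c : ℝ) {y : ℝ} (hy : 0 < y) :
    Summable (fun r : ℕ => c * dML μ k r y) := by
  apply summable_ml_aux hμ0 hμ1 (q := |k| * y^μ) (by positivity) (|c| * (μ/y))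
  intro r
  rw [norm_mul, Real.norm_eq_abs (c)]
  calc |c| * ‖dML μ k r y‖
      ≤ |c| * ((μ/y) * (((r:ℝ)+1) * (|k| * y^μ)^r / Real.Gamma (μ*r+1))) := by
        apply mul_le_mul_of_nonneg_left (norm_dML_le hμ0 hy le_rfl le_rfl r) (abs_nonneg c)
    _ = |c| * (μ/y) * (((r:ℝ)+1) * (|k| * y^μ)^r / Real.Gamma (μ*r+1)) := by ring

lemma summable_ml_at {μ : ℝ} (hμ0 : 0 < μ) (hμ1 : μ < 1) (w : ℝ) :
    Summable (fun r : ℕ => w ^ r / Real.Gamma (μ*r+1)) := by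
  apply summable_ml_aux hμ0 hμ1 (q := |w|) (abs_nonneg w) 1
  intro r
  have hΓ : 0 < Real.Gamma (μ*r+1) := Real.Gamma_pos_of_pos (by positivity : (0:ℝ) < μ*r+1)
  rw [Real.norm_eq_abs, abs_div, abs_pow, abs_of_pos hΓ, one_mul]
  rw [show |w|^r / Real.Gamma (μ*r+1) = 1 * |w|^r / Real.Gamma (μ*r+1) by ring]
  gcongr
  linarith [Nat.cast_nonneg (α := ℝ) r]

lemma ml_hasDerivAt {μ : ℝ} (hμ0 : 0 < μ) (hμ1 : μ < 1) (k : ℝ) {y : ℝ} (hy : 0 < y) :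
    HasDerivAt (fun z => mittagLeffler μ 1 (k * z ^ μ)) (∑' r : ℕ, dML μ k r y) y := by
  set t : Set ℝ := Ioo (y/2) (y+1) with ht
  have hyt : y ∈ t := by constructor <;> simp <;> linarith
  have hu : Summable (fun r : ℕ =>
      (μ/(y/2)) * (((r:ℝ)+1) * (|k| * (y+1)^μ)^r / Real.Gamma (μ*r+1))) :=
    (summable_ml_type hμ0 hμ1 (q := |k| * (y+1)^μ) (by positivity)).mul_left _
  have hg : ∀ (r:ℕ) (z:ℝ), z ∈ t →
      HasDerivAt (fun w => (k * w ^ μ) ^ r / Real.Gamma (μ*r+1)) (dML μ k r z) z := by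
    intro r z hz
    have hz0 : 0 < z := lt_trans (by linarith [hy] : (0:ℝ) < y/2) hz.1
    have base : HasDerivAt (fun w : ℝ => w ^ (μ*(r:ℝ))) ((μ*r) * z^(μ*r-1)) z :=
      Real.hasDerivAt_rpow_const (Or.inl hz0.ne')
    have c : HasDerivAt (fun w : ℝ => k^r / Real.Gamma (μ*r+1) * w ^ (μ*(r:ℝ)))
        (k^r / Real.Gamma (μ*r+1) * ((μ*r) * z^(μ*r-1))) z := base.const_mul _
    have heq : (fun w => (k * w ^ μ) ^ r / Real.Gamma (μ*r+1))
        =ᶠ[nhds z] (fun w : ℝ => k^r / Real.Gamma (μ*r+1) * w ^ (μ*(r:ℝ))) := by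
      filter_upwards [Ioi_mem_nhds hz0] with w hw
      rw [mul_pow, ← Real.rpow_natCast (w^μ) r, ← Real.rpow_mul (le_of_lt hw)]
      ring
    have := c.congr_of_eventuallyEq heq
    convert this using 1
    case e'_9 => rw [dML]; ring
    all_goals rfl
  have hg' : ∀ (r:ℕ) (z:ℝ), z ∈ t → ‖dML μ k r z‖
      ≤ (μ/(y/2)) * (((r:ℝ)+1) * (|k| * (y+1)^μ)^r / Real.Gamma (μ*r+1)) := by
    intro r z hz
    exact norm_dML_le hμ0 (by linarith) (le_of_lt hz.1) (le_of_lt hz.2) r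
  have hg0 : Summable (fun r : ℕ => (k * y ^ μ) ^ r / Real.Gamma (μ*r+1)) :=
    summable_ml_at hμ0 hμ1 _
  have := hasDerivAt_tsum_of_isPreconnected hu isOpen_Ioo
    (convex_Ioo _ _).isPreconnected hg hg' hyt hg0 hyt
  simpa only [mittagLeffler] using this

lemma summable_P {μ : ℝ} (hμ0 : 0 < μ) (hμ1 : μ < 1) {X : ℝ} (hX : 0 ≤ X) (c q : ℝ) :
    Summable (fun m : ℕ => c * q^(m+1) * X^(μ*m)/Real.Gamma (μ*m+1)) := by
  apply summable_ml_aux hμ0 hμ1 (q := |q| * X^μ) (by positivity) |c * q|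
  intro m
  have hΓ : 0 < Real.Gamma (μ*m+1) := Real.Gamma_pos_of_pos (by positivity)
  have e1 : (|q| * X^μ)^m = |q|^m * X^(μ*m) := by
    rw [mul_pow, ← Real.rpow_natCast (X^μ) m, ← Real.rpow_mul hX]
  rw [Real.norm_eq_abs, abs_div, abs_of_pos hΓ, abs_mul, abs_mul, abs_pow, e1,
    pow_succ, abs_mul, abs_of_nonneg (Real.rpow_nonneg hX _)]
  rw [show |c| * (|q|^m * |q|) * X^(μ*m) / Real.Gamma (μ*m+1)
      = (1:ℝ) * (|c| * |q| * (|q|^m * X^(μ*m))) / Real.Gamma (μ*m+1) by ring,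
    show |c| * |q| * (((m:ℝ)+1) * (|q|^m * X^(μ*m)) / Real.Gamma (μ*m+1))
      = ((m:ℝ)+1) * (|c| * |q| * (|q|^m * X^(μ*m))) / Real.Gamma (μ*m+1) by ring]
  gcongr
  linarith [Nat.cast_nonneg (α := ℝ) m]

lemma caputo_master {μ : ℝ} (hμ0 : 0 < μ) (hμ1 : μ < 1) {n : ℕ} (A B : ℝ) (C k : Fin n → ℝ)
    {x : ℝ} (hx : 0 < x) (u : ℝ → ℝ)
    (hu : ∀ y : ℝ, 0 < y →
      u y = A + B * y ^ μ + ∑ s, C s * mittagLeffler μ 1 (k s * y ^ μ)) :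
    (1 / Real.Gamma (1-μ)) * ∫ y in (0:ℝ)..x, deriv u y * (x - y) ^ (-μ)
      = B * Real.Gamma (μ+1) + ∑ s, C s * k s * mittagLeffler μ 1 (k s * x ^ μ) := by
  have hΓνpos : 0 < Real.Gamma (1-μ) := Real.Gamma_pos_of_pos (by linarith)
  set w : ℕ → ℝ := fun r =>
    (if r = 1 then B else 0) + ∑ s, C s * k s ^ r / Real.Gamma (μ*r+1) with hw
  -- Step A : derivative identity
  have hD : ∀ y : ℝ, 0 < y →
      HasDerivAt u (∑' r : ℕ, w r * (μ*r) * y^(μ*(r:ℝ)-1)) y := by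
    intro y hy
    have h1 : HasDerivAt (fun z : ℝ => z ^ μ) (μ * y^(μ-1)) y :=
      Real.hasDerivAt_rpow_const (Or.inl hy.ne')
    have h2 : HasDerivAt (fun z : ℝ => A + B * z ^ μ) (B * (μ * y^(μ-1))) y :=
      (h1.const_mul B).const_add A
    have h3 : HasDerivAt (fun z : ℝ => ∑ s, C s * mittagLeffler μ 1 (k s * z ^ μ))
        (∑ s, C s * ∑' r : ℕ, dML μ (k s) r y) y :=
      HasDerivAt.fun_sum (fun s _ => (ml_hasDerivAt hμ0 hμ1 (k s) hy).const_mul (C s))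
    have h4 := h2.add h3
    have heq : u =ᶠ[nhds y]
        (fun z : ℝ => A + B * z ^ μ + ∑ s, C s * mittagLeffler μ 1 (k s * z ^ μ)) := by
      filter_upwards [Ioi_mem_nhds hy] with z hz
      exact hu z hz
    have h5 := (h4.congr_of_eventuallyEq heq)
    -- identify value
    have val : B * (μ * y^(μ-1)) + ∑ s, C s * ∑' r : ℕ, dML μ (k s) r y
        = ∑' r : ℕ, w r * (μ*r) * y^(μ*(r:ℝ)-1) := by
      have hsum1 : Summable (fun r : ℕ => (if r = 1 then B else 0) * ((μ*r) * y^(μ*(r:ℝ)-1))) := by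
        apply summable_of_ne_finset_zero (s := {1})
        intro r hr
        simp only [Finset.mem_singleton] at hr
        rw [if_neg hr, zero_mul]
      have hsum2 : ∀ s : Fin n, Summable (fun r : ℕ => C s * dML μ (k s) r y) :=
        fun s => summable_dML_mul hμ0 hμ1 (k s) (C s) hy
      have e_r : ∀ r : ℕ, w r * (μ*r) * y^(μ*(r:ℝ)-1)
          = (if r = 1 then B else 0) * ((μ*r) * y^(μ*(r:ℝ)-1))
            + ∑ s, C s * dML μ (k s) r y := by
        intro r
        rw [hw]
        simp only [dML]
        rw [add_mul, add_mul, Finset.sum_mul, Finset.sum_mul]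
        congr 1
        · ring
        · exact Finset.sum_congr rfl fun s _ => by ring
      rw [tsum_congr e_r, Summable.tsum_add hsum1 (summable_sum (fun s _ => hsum2 s))]
      congr 1
      · rw [tsum_eq_single 1 (fun r hr => by rw [if_neg hr, zero_mul])]
        norm_num
      · rw [Summable.tsum_finsetSum (fun s _ => hsum2 s)]
        exact Finset.sum_congr rfl fun s _ => (tsum_mul_left).symm
    rw [← val]
    exact h5
  -- Step B : swap integral and sum
  set G : ℕ → ℝ → ℝ :=
    fun r y => w r * (μ*(r:ℝ)) * y^(μ*(r:ℝ)-1) * (x-y)^(-μ) with hG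
  set V : ℕ → ℝ := fun r => Real.Gamma (μ*(r:ℝ)) * Real.Gamma (1-μ)
      / Real.Gamma (μ*(r:ℝ)-μ+1) * x^(μ*(r:ℝ)-μ) with hV
  have hcast : ∀ m : ℕ, (((m+1:ℕ)):ℝ) = (m:ℝ)+1 := fun m => by push_cast; ring
  have hpos1 : ∀ m : ℕ, (0:ℝ) < μ*((m+1:ℕ):ℝ) := by
    intro m; rw [hcast]; have := Nat.cast_nonneg (α := ℝ) m; nlinarith
  have hbs : ∀ m : ℕ, ∫ y in (0:ℝ)..x, y^(μ*((m+1:ℕ):ℝ)-1)*(x-y)^(-μ) = V (m+1) := by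
    intro m
    have h := betaScaled (a := μ*((m+1:ℕ):ℝ)-1) (b := -μ)
      (by have := hpos1 m; linarith) (by linarith) hx
    rw [h, hV]
    rw [show μ*((m+1:ℕ):ℝ)-1+1 = μ*((m+1:ℕ):ℝ) by ring,
      show μ*((m+1:ℕ):ℝ)-1 + -μ + 2 = μ*((m+1:ℕ):ℝ)-μ+1 by ring,
      show μ*((m+1:ℕ):ℝ)-1 + -μ + 1 = μ*((m+1:ℕ):ℝ)-μ by ring,
      show -μ+1 = 1-μ by ring]
  have hpure : ∀ m : ℕ, ∫ y in Ioc (0:ℝ) x, y^(μ*((m+1:ℕ):ℝ)-1)*(x-y)^(-μ) = V (m+1) := by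
    intro m; rw [← intervalIntegral.integral_of_le hx.le]; exact hbs m
  have hpureInt : ∀ m : ℕ,
      IntegrableOn (fun y => y^(μ*((m+1:ℕ):ℝ)-1)*(x-y)^(-μ)) (Ioc 0 x) volume := by
    intro m
    exact (intervalIntegrable_iff_integrableOn_Ioc_of_le hx.le).mp
      (betaIntegrable (by have := hpos1 m; linarith) (by linarith) hx)
  have hInt : ∀ r : ℕ, Integrable (G r) (volume.restrict (Ioc 0 x)) := by
    intro r
    match r with
    | 0 =>
      have hz : G 0 = fun _ => (0:ℝ) := by
        funext y; simp [hG]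
      rw [hz]; exact integrable_zero _ _ _
    | (m+1) =>
      have h2 := (hpureInt m).const_mul (w (m+1) * (μ*((m+1:ℕ):ℝ)))
      apply h2.congr (ae_of_all _ fun y => by simp only [hG]; ring)
  have hJ : ∀ m : ℕ, ∫ y in Ioc (0:ℝ) x, G (m+1) y
      = w (m+1) * (μ*((m+1:ℕ):ℝ)) * V (m+1) := by
    intro m
    have e : G (m+1) = fun y => (w (m+1) * (μ*((m+1:ℕ):ℝ)))
        * (y^(μ*((m+1:ℕ):ℝ)-1)*(x-y)^(-μ)) := funext fun y => by simp only [hG]; ring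
    rw [e, MeasureTheory.integral_const_mul, hpure, mul_assoc]
  have hN : ∀ m : ℕ, ∫ y in Ioc (0:ℝ) x, ‖G (m+1) y‖
      = |w (m+1) * (μ*((m+1:ℕ):ℝ))| * V (m+1) := by
    intro m
    have e : ∀ y ∈ Ioc (0:ℝ) x, ‖G (m+1) y‖
        = |w (m+1) * (μ*((m+1:ℕ):ℝ))| * (y^(μ*((m+1:ℕ):ℝ)-1)*(x-y)^(-μ)) := by
      intro y hy
      have h1 : (0:ℝ) ≤ y^(μ*((m+1:ℕ):ℝ)-1) := Real.rpow_nonneg hy.1.le _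
      have h2 : (0:ℝ) ≤ (x-y)^(-μ) := Real.rpow_nonneg (by linarith [hy.2]) _
      rw [show G (m+1) y = (w (m+1) * (μ*((m+1:ℕ):ℝ)))
          * (y^(μ*((m+1:ℕ):ℝ)-1)*(x-y)^(-μ)) by simp only [hG]; ring]
      rw [Real.norm_eq_abs, abs_mul, abs_of_nonneg (mul_nonneg h1 h2)]
    rw [MeasureTheory.setIntegral_congr_fun measurableSet_Ioc e,
      MeasureTheory.integral_const_mul, hpure]
  have hN0 : ∫ y in Ioc (0:ℝ) x, ‖G 0 y‖ = 0 := by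
    have hz : (fun y => ‖G 0 y‖) = fun _ => (0:ℝ) := by
      funext y; simp [hG]
    rw [hz]; simp
  -- summability of norm integrals
  have hVpos : ∀ m : ℕ, 0 ≤ V (m+1) := by
    intro m
    rw [← hpure m]
    apply MeasureTheory.setIntegral_nonneg measurableSet_Ioc
    intro y hy
    exact mul_nonneg (Real.rpow_nonneg hy.1.le _) (Real.rpow_nonneg (by linarith [hy.2]) _)
  have hwbound : ∀ m : ℕ, |w (m+1)| * Real.Gamma (μ*((m+1:ℕ):ℝ)+1)
      ≤ (if m = 0 then |B| * Real.Gamma (μ+1) else 0)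
        + ∑ s, |C s| * |k s|^(m+1) := by
    intro m
    have hΓp : 0 < Real.Gamma (μ*((m+1:ℕ):ℝ)+1) :=
      Real.Gamma_pos_of_pos (by have := hpos1 m; linarith)
    have h1 : |w (m+1)| ≤ |if m+1 = 1 then B else 0|
        + ∑ s, |C s| * |k s|^(m+1) / Real.Gamma (μ*((m+1:ℕ):ℝ)+1) := by
      rw [hw]
      refine (abs_add_le _ _).trans ?_
      gcongr
      refine (Finset.abs_sum_le_sum_abs _ _).trans ?_
      apply le_of_eq
      exact Finset.sum_congr rfl fun s _ => by
        rw [abs_div, abs_of_pos hΓp, abs_mul, abs_pow]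
    have h2 := mul_le_mul_of_nonneg_right h1 hΓp.le
    refine h2.trans (le_of_eq ?_)
    rw [add_mul, Finset.sum_mul]
    congr 1
    · rcases Nat.eq_zero_or_pos m with hm | hm
      · subst hm
        rw [if_pos rfl, if_pos rfl, show μ*((0+1:ℕ):ℝ)+1 = μ+1 by push_cast; ring]
      · have hm1 : m ≠ 0 := hm.ne'
        have hm2 : m + 1 ≠ 1 := by omega
        rw [if_neg hm2, if_neg hm1, abs_zero, zero_mul]
    · exact Finset.sum_congr rfl fun s _ => div_mul_cancel₀ _ hΓp.ne'
  have hVeq : ∀ m : ℕ, (μ*((m+1:ℕ):ℝ)) * V (m+1)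
      = Real.Gamma (μ*((m+1:ℕ):ℝ)+1) * Real.Gamma (1-μ) * x^(μ*(m:ℝ))
        / Real.Gamma (μ*(m:ℝ)+1) := by
    intro m
    have h1 : Real.Gamma (μ*((m+1:ℕ):ℝ)+1)
        = (μ*((m+1:ℕ):ℝ)) * Real.Gamma (μ*((m+1:ℕ):ℝ)) :=
      Real.Gamma_add_one (hpos1 m).ne'
    rw [hV]
    simp only
    rw [show μ*((m+1:ℕ):ℝ)-μ+1 = μ*(m:ℝ)+1 by rw [hcast]; ring,
      show μ*((m+1:ℕ):ℝ)-μ = μ*(m:ℝ) by rw [hcast]; ring, h1]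
    ring
  have hNsum : Summable (fun r : ℕ => ∫ y in Ioc (0:ℝ) x, ‖G r y‖) := by
    apply (summable_nat_add_iff 1).mp
    have e : (fun m : ℕ => ∫ y in Ioc (0:ℝ) x, ‖G (m+1) y‖)
        = fun m : ℕ => |w (m+1) * (μ*((m+1:ℕ):ℝ))| * V (m+1) := funext hN
    rw [e]
    have hg : Summable (fun m : ℕ => Real.Gamma (1-μ) *
        (((if m = 0 then |B| * Real.Gamma (μ+1) else 0)
          + ∑ s, |C s| * |k s|^(m+1)) * (x^(μ*(m:ℝ))/Real.Gamma (μ*(m:ℝ)+1)))) := by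
      apply Summable.mul_left
      have e2 : (fun m : ℕ => ((if m = 0 then |B| * Real.Gamma (μ+1) else 0)
            + ∑ s, |C s| * |k s|^(m+1)) * (x^(μ*(m:ℝ))/Real.Gamma (μ*(m:ℝ)+1)))
          = fun m : ℕ => (if m = 0 then |B| * Real.Gamma (μ+1) else 0)
              * (x^(μ*(m:ℝ))/Real.Gamma (μ*(m:ℝ)+1))
            + ∑ s, |C s| * |k s|^(m+1) * x^(μ*(m:ℝ))/Real.Gamma (μ*(m:ℝ)+1) := by
        funext m
        rw [add_mul, Finset.sum_mul]
        congr 1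
        exact Finset.sum_congr rfl fun s _ => by ring
      rw [e2]
      apply Summable.add
      · apply summable_of_ne_finset_zero (s := {0})
        intro m hm
        simp only [Finset.mem_singleton] at hm
        rw [if_neg hm, zero_mul]
      · exact summable_sum fun s _ => summable_P hμ0 hμ1 hx.le (|C s|) (|k s|)
    apply Summable.of_nonneg_of_le (fun m => mul_nonneg (abs_nonneg _) (hVpos m)) _ hg
    intro m
    have hΓ2 : 0 < Real.Gamma (μ*(m:ℝ)+1) := Real.Gamma_pos_of_pos (by positivity)
    have e3 : |w (m+1) * (μ*((m+1:ℕ):ℝ))| * V (m+1)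
        = (|w (m+1)| * Real.Gamma (μ*((m+1:ℕ):ℝ)+1))
          * (Real.Gamma (1-μ) * x^(μ*(m:ℝ)) / Real.Gamma (μ*(m:ℝ)+1)) := by
      rw [abs_mul, abs_of_nonneg (hpos1 m).le, mul_assoc, hVeq m]
      ring
    rw [e3]
    have h4 := mul_le_mul_of_nonneg_right (hwbound m)
      (by positivity : (0:ℝ) ≤ Real.Gamma (1-μ) * x^(μ*(m:ℝ)) / Real.Gamma (μ*(m:ℝ)+1))
    refine h4.trans (le_of_eq ?_)
    ring
  have hsumJ : Summable (fun r : ℕ => ∫ y in Ioc (0:ℝ) x, G r y) :=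
    Summable.of_norm_bounded hNsum (fun r => norm_integral_le_integral_norm _)
  have h6 : ∀ y, y ∈ Set.uIoc (0:ℝ) x → deriv u y * (x - y)^(-μ) = ∑' r : ℕ, G r y := by
    intro y hy
    rw [Set.uIoc_of_le hx.le] at hy
    rw [(hD y hy.1).deriv]
    exact (tsum_mul_right).symm
  have h7 : (∫ y in (0:ℝ)..x, deriv u y * (x - y)^(-μ))
      = ∑' r : ℕ, ∫ y in Ioc (0:ℝ) x, G r y := by
    rw [intervalIntegral.integral_congr_ae (MeasureTheory.ae_of_all _ h6),
      intervalIntegral.integral_of_le hx.le]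
    exact (MeasureTheory.integral_tsum_of_summable_integral_norm hInt hNsum).symm
  rw [h7]
  have h8 : (∑' r : ℕ, ∫ y in Ioc (0:ℝ) x, G r y)
      = ∑' m : ℕ, w (m+1) * (μ*((m+1:ℕ):ℝ)) * V (m+1) := by
    rw [Summable.tsum_eq_zero_add hsumJ,
      show (∫ y in Ioc (0:ℝ) x, G 0 y) = 0 by
        rw [show G 0 = fun _ => (0:ℝ) from funext fun y => by simp [hG]]; simp,
      zero_add]
    exact tsum_congr hJ
  rw [h8]
  have h9 : ∀ m : ℕ, w (m+1) * (μ*((m+1:ℕ):ℝ)) * V (m+1)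
      = Real.Gamma (1-μ) * (w (m+1) * Real.Gamma (μ*((m+1:ℕ):ℝ)+1) * x^(μ*(m:ℝ))
        / Real.Gamma (μ*(m:ℝ)+1)) := by
    intro m
    rw [mul_assoc, hVeq m]
    ring
  rw [tsum_congr h9, tsum_mul_left, ← mul_assoc, one_div,
    inv_mul_cancel₀ hΓνpos.ne', one_mul]
  -- Step D : evaluate the series
  have hP : ∀ m : ℕ, w (m+1) * Real.Gamma (μ*((m+1:ℕ):ℝ)+1) * x^(μ*(m:ℝ))
        / Real.Gamma (μ*(m:ℝ)+1)
      = (if m = 0 then B * Real.Gamma (μ+1) else 0)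
        + ∑ s, (C s * k s) * ((k s * x^μ)^m / Real.Gamma (μ*(m:ℝ)+1)) := by
    intro m
    have hΓp : 0 < Real.Gamma (μ*((m+1:ℕ):ℝ)+1) :=
      Real.Gamma_pos_of_pos (by have := hpos1 m; linarith)
    have hΓ2 : 0 < Real.Gamma (μ*(m:ℝ)+1) := Real.Gamma_pos_of_pos (by positivity)
    rw [hw]
    simp only
    rw [add_mul, add_mul, add_div, Finset.sum_mul, Finset.sum_mul, Finset.sum_div]
    congr 1
    · rcases Nat.eq_zero_or_pos m with hm | hm
      · subst hm
        rw [if_pos rfl, if_pos rfl]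
        rw [show μ*((0+1:ℕ):ℝ)+1 = μ+1 by push_cast; ring]
        norm_num [Real.Gamma_one]
      · rw [if_neg (by omega : ¬ (m+1 = 1)), if_neg hm.ne']
        simp
    · apply Finset.sum_congr rfl
      intro s _
      have e4 : (k s * x^μ)^m = k s^m * x^(μ*(m:ℝ)) := by
        rw [mul_pow, ← Real.rpow_natCast (x^μ) m, ← Real.rpow_mul hx.le]
      rw [e4, pow_succ]
      field_simp
  rw [tsum_congr hP]
  have hs1 : Summable (fun m : ℕ => if m = 0 then B * Real.Gamma (μ+1) else 0) := by
    apply summable_of_ne_finset_zero (s := {0})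
    intro m hm
    simp only [Finset.mem_singleton] at hm
    rw [if_neg hm]
  have hs2 : ∀ s : Fin n, Summable (fun m : ℕ =>
      (C s * k s) * ((k s * x^μ)^m / Real.Gamma (μ*(m:ℝ)+1))) :=
    fun s => (summable_ml_at hμ0 hμ1 (k s * x^μ)).mul_left _
  rw [Summable.tsum_add hs1 (summable_sum fun s _ => hs2 s),
    tsum_eq_single 0 (fun m hm => by rw [if_neg hm]), if_pos rfl,
    Summable.tsum_finsetSum (fun s _ => hs2 s)]
  congr 1
  refine Finset.sum_congr rfl fun s _ => ?_
  rw [tsum_mul_left]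
  simp only [mittagLeffler]

/-- **Exact solution of the linear time-space fractional diffusion–convection equation**
`C_t^α u = a₀ C_x^β(C_x^β u) - b₁ C_x^β u` for all `x > 0`, `t > 0`. -/
theorem linear_fractional_diffusion_convection_exact (α β : ℝ)
    (hα : α ∈ Set.Ioo (0 : ℝ) 1) (hβ : β ∈ Set.Ioo (0 : ℝ) 1)
    (n : ℕ) (hn : 1 ≤ n) (c₁ c₂ a₀ b₁ : ℝ) (r kc : Fin n → ℝ) :
    ∀ x : ℝ, 0 < x → ∀ t : ℝ, 0 < t →
      caputoT α (uSol α β n c₁ c₂ a₀ b₁ r kc) x t =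
        a₀ * caputoX β (caputoX β (uSol α β n c₁ c₂ a₀ b₁ r kc)) x t
          - b₁ * caputoX β (uSol α β n c₁ c₂ a₀ b₁ r kc) x t := by
  obtain ⟨hα0, hα1⟩ := hα
  obtain ⟨hβ0, hβ1⟩ := hβ
  intro x hx t ht
  have hΓα : (0:ℝ) < Real.Gamma (α+1) := Real.Gamma_pos_of_pos (by linarith)
  -- Application 1 : caputoT
  have hT : caputoT α (uSol α β n c₁ c₂ a₀ b₁ r kc) x t
      = -(c₂ * b₁ * (Real.Gamma (β+1) / Real.Gamma (α+1))) * Real.Gamma (α+1)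
        + ∑ s, (r s * mittagLeffler β 1 (kc s * x ^ β)) * ((a₀ * kc s - b₁) * kc s)
          * mittagLeffler α 1 ((a₀ * kc s - b₁) * kc s * t ^ α) := by
    apply caputo_master hα0 hα1 (c₁ + c₂ * x ^ β)
      (-(c₂ * b₁ * (Real.Gamma (β+1) / Real.Gamma (α+1))))
      (fun s => r s * mittagLeffler β 1 (kc s * x ^ β))
      (fun s => (a₀ * kc s - b₁) * kc s) ht
    intro y hy
    simp only [uSol]
    rw [show (∑ s : Fin n, r s * mittagLeffler α 1 ((a₀ * kc s - b₁) * kc s * y ^ α) *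
          mittagLeffler β 1 (kc s * x ^ β))
        = ∑ s : Fin n, (r s * mittagLeffler β 1 (kc s * x ^ β)) *
          mittagLeffler α 1 ((a₀ * kc s - b₁) * kc s * y ^ α) from
      Finset.sum_congr rfl fun s _ => by ring]
    ring
  -- Application 2 : caputoX of uSol, at any positive point
  have hCX : ∀ z : ℝ, 0 < z → caputoX β (uSol α β n c₁ c₂ a₀ b₁ r kc) z t
      = c₂ * Real.Gamma (β+1)
        + ∑ s, (r s * mittagLeffler α 1 ((a₀ * kc s - b₁) * kc s * t ^ α)) * kc s
          * mittagLeffler β 1 (kc s * z ^ β) := by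
    intro z hz
    apply caputo_master hβ0 hβ1
      (c₁ - c₂ * b₁ * (Real.Gamma (β+1) / Real.Gamma (α+1)) * t ^ α) c₂
      (fun s => r s * mittagLeffler α 1 ((a₀ * kc s - b₁) * kc s * t ^ α)) kc hz
    intro y hy
    simp only [uSol]
  -- Application 3 : caputoX of caputoX
  have hXX : caputoX β (caputoX β (uSol α β n c₁ c₂ a₀ b₁ r kc)) x t
      = 0 * Real.Gamma (β+1)
        + ∑ s, (r s * mittagLeffler α 1 ((a₀ * kc s - b₁) * kc s * t ^ α) * kc s) * kc s
          * mittagLeffler β 1 (kc s * x ^ β) := by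
    apply caputo_master hβ0 hβ1 (c₂ * Real.Gamma (β+1)) 0
      (fun s => r s * mittagLeffler α 1 ((a₀ * kc s - b₁) * kc s * t ^ α) * kc s) kc hx
    intro y hy
    rw [hCX y hy, zero_mul, add_zero]
  rw [hT, hXX, hCX x hx]
  have e0 : -(c₂ * b₁ * (Real.Gamma (β+1) / Real.Gamma (α+1))) * Real.Gamma (α+1)
      = -(c₂ * b₁ * Real.Gamma (β+1)) := by
    field_simp
  rw [e0]
  rw [show (∑ s : Fin n, (r s * mittagLeffler β 1 (kc s * x ^ β)) *
        ((a₀ * kc s - b₁) * kc s) *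
        mittagLeffler α 1 ((a₀ * kc s - b₁) * kc s * t ^ α))
      = ∑ s : Fin n,
        (a₀ * ((r s * mittagLeffler α 1 ((a₀ * kc s - b₁) * kc s * t ^ α) * kc s) * kc s *
            mittagLeffler β 1 (kc s * x ^ β))
          - b₁ * ((r s * mittagLeffler α 1 ((a₀ * kc s - b₁) * kc s * t ^ α)) * kc s *
            mittagLeffler β 1 (kc s * x ^ β))) from
    Finset.sum_congr rfl fun s _ => by ring]
  rw [Finset.sum_sub_distrib, ← Finset.mul_sum, ← Finset.mul_sum]
  ring
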